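/- arXiv:2210.10575 — 10 statements merged into one kernel-verified Lean document; each statement's English description precedes it below -/
import Mathlib

section
/- Let m ≥ 2 and let a : Fin m → ℂ[X] be an injective family of nonzero polynomials such that a i * a j + 4 is a square in ℂ[X] whenever i ≠ j, and such that at least one a i is nonconstant. Then at most one of the polynomials a i is constant: for all indices i, j, if deg(a i) = 0 and deg(a j) = 0 then i = j. -/
open Polynomial

/-- In a D(4)-m-tuple of complex polynomials, not all constant,
at most one element is a constant polynomial. -/
theorem at_most_one_constant_in_D4_tuple_complex
    (m : ℕ) (hm : 2 ≤ m) (a : Fin m → ℂ[X])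
    (hinj : Function.Injective a)
    (hne : ∀ i, a i ≠ 0)
    (hsq : ∀ i j, i ≠ j → IsSquare (a i * a j + 4))
    (hnonconst : ∃ i, 0 < (a i).natDegree) :
    ∀ i j, (a i).natDegree = 0 → (a j).natDegree = 0 → i = j := by
  intro i j hi hj
  by_contra hij
  obtain ⟨k, hk⟩ := hnonconst
  have hki : k ≠ i := by rintro rfl; omega
  have hkj : k ≠ j := by rintro rfl; omega
  obtain ⟨u, hu⟩ := hsq i k (Ne.symm hki)
  obtain ⟨v, hv⟩ := hsq j k (Ne.symm hkj)
  set c := (a i).coeff 0 with hc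
  set d := (a j).coeff 0 with hd
  have hai : a i = C c := Polynomial.eq_C_of_natDegree_eq_zero hi
  have haj : a j = C d := Polynomial.eq_C_of_natDegree_eq_zero hj
  have hc0 : c ≠ 0 := fun h => hne i (by rw [hai, h, map_zero])
  have hd0 : d ≠ 0 := fun h => hne j (by rw [haj, h, map_zero])
  have hcd : c ≠ d := fun h => hij (hinj (by rw [hai, haj, h]))
  obtain ⟨e, he⟩ := IsAlgClosed.exists_pow_nat_eq d (n := 2) (by norm_num)
  obtain ⟨f, hf⟩ := IsAlgClosed.exists_pow_nat_eq c (n := 2) (by norm_num)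
  have he' : (C e : ℂ[X]) * C e = C d := by rw [← C_mul, ← sq, he]
  have hf' : (C f : ℂ[X]) * C f = C c := by rw [← C_mul, ← sq, hf]
  have hu' : C c * a k + 4 = u * u := by rw [← hai]; exact hu
  have hv' : C d * a k + 4 = v * v := by rw [← haj]; exact hv
  have hC : (C (4*(d-c)) : ℂ[X]) = 4 * C d - 4 * C c := by
    simp only [map_mul, map_sub, map_ofNat]; ring
  have key : (C e * u - C f * v) * (C e * u + C f * v) = C (4*(d-c)) := by
    rw [hC]
    linear_combination (u*u) * he' - (v*v) * hf' - C d * hu' + C c * hv'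
  have ht : (4*(d-c)) ≠ 0 := by
    intro h
    have h0 : d - c = 0 := (mul_eq_zero.mp h).resolve_left (by norm_num)
    exact hcd (sub_eq_zero.mp h0).symm
  have hunit : IsUnit (C (4*(d-c)) : ℂ[X]) :=
    Polynomial.isUnit_C.mpr (isUnit_iff_ne_zero.mpr ht)
  have hAB : IsUnit ((C e * u - C f * v) * (C e * u + C f * v)) := by
    rw [key]; exact hunit
  have hA : IsUnit (C e * u - C f * v) := isUnit_of_mul_isUnit_left hAB
  have hB : IsUnit (C e * u + C f * v) := isUnit_of_mul_isUnit_right hAB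
  have hdA : (C e * u - C f * v).natDegree = 0 := Polynomial.natDegree_eq_zero_of_isUnit hA
  have hdB : (C e * u + C f * v).natDegree = 0 := Polynomial.natDegree_eq_zero_of_isUnit hB
  have he0 : e ≠ 0 := by
    intro h; apply hd0; rw [← he, h]; ring
  have huu : (C (2*e) : ℂ[X]) * u = (C e * u - C f * v) + (C e * u + C f * v) := by
    simp only [map_mul, map_ofNat]; ring
  have hdu : u.natDegree = 0 := by
    have h1 : ((C (2*e) : ℂ[X]) * u).natDegree = 0 := by
      rw [huu]
      have := Polynomial.natDegree_add_le (C e * u - C f * v) (C e * u + C f * v)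
      omega
    rwa [Polynomial.natDegree_C_mul (by simpa using he0)] at h1
  have hak : (C c * a k).natDegree = 0 := by
    have hre : (C c * a k) = u * u - 4 := by linear_combination hu'
    rw [hre]
    have h2 := Polynomial.natDegree_sub_le (u*u) 4
    have h3 := Polynomial.natDegree_mul_le (p := u) (q := u)
    have h4 : (4 : ℂ[X]).natDegree = 0 := Polynomial.natDegree_ofNat 4
    omega
  rw [Polynomial.natDegree_C_mul hc0] at hak
  omega
end

section
/- Let d ∈ ℤ[i][X] and x, y, z ∈ ℤ[i][X] satisfy a*d + 4 = x^2, b*d + 4 = y^2 and c*d + 4 = z^2. Then: (1) there exist z0, x0 ∈ ℤ[i][X] with a*z0^2 − c*x0^2 = 4*(a − c), 4*deg(z0) ≤ 3γ − α and 4*deg(x0) ≤ α + γ, there exists d0 ∈ ℤ[i][X] with c*d0 + 4 = z0^2 and a*d0 + 4 = x0^2, and there exist a nonnegative integer m and a sequence (v_k)_{k≥0} in ℤ[i][X] with v_0 = z0, 2*v_1 = s*z0 + c*x0 and v_{k+2} = s*v_{k+1} − v_k for all k, such that z = v_m; (2) there exist z1, y1 ∈ ℤ[i][X] with b*z1^2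 − c*y1^2 = 4*(b − c), 4*deg(z1) ≤ 3γ − β and 4*deg(y1) ≤ β + γ, there exists d1 ∈ ℤ[i][X] with c*d1 + 4 = z1^2 and b*d1 + 4 = y1^2, and there exist a nonnegative integer n and a sequence (w_k)_{k≥0} in ℤ[i][X] with w_0 = z1, 2*w_1 = t*z1 + c*y1 and w_{k+2} = t*w_{k+1} − w_k for all k, such that z = w_n. -/
open Polynomial

lemma prime_pii : Prime (⟨1,1⟩ : GaussianInt) := by
  rw [← UniqueFactorizationMonoid.irreducible_iff_prime]
  constructor
  · rw [← Zsqrtd.norm_eq_one_iff]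
    decide
  · intro x y hxy
    have hn : x.norm.natAbs * y.norm.natAbs = 2 := by
      rw [← Int.natAbs_mul, ← Zsqrtd.norm_mul, ← hxy]; decide
    have hd : x.norm.natAbs ∣ 2 := ⟨_, hn.symm⟩
    rcases (Nat.Prime.eq_one_or_self_of_dvd Nat.prime_two _ hd) with h | h
    · exact Or.inl (Zsqrtd.norm_eq_one_iff.mp h)
    · refine Or.inr (Zsqrtd.norm_eq_one_iff.mp ?_)
      rw [h] at hn; omega

lemma prime_CP : Prime (C (⟨1,1⟩ : GaussianInt) : GaussianInt[X]) :=
  Polynomial.prime_C_iff.mpr prime_pii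

lemma two_eq : (2 : GaussianInt[X]) = C (⟨1,1⟩) ^ 2 * C (⟨0,-1⟩) := by
  rw [← C_pow, ← C_mul]
  have : ((⟨1,1⟩ : GaussianInt)^2 * ⟨0,-1⟩) = 2 := by decide
  rw [this, map_ofNat]

lemma J_sq : (C (⟨0,-1⟩ : GaussianInt) : GaussianInt[X]) ^ 2 = -1 := by
  rw [← C_pow]
  have : ((⟨0,-1⟩ : GaussianInt))^2 = -1 := by decide
  rw [this, map_neg, map_one]

-- key divisibility lemma
lemma key_dvd (u v w : GaussianInt[X]) (h : u^2 = 4*w + 2*v*u) : 2 ∣ u := by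
  set P : GaussianInt[X] := C (⟨1,1⟩) with hPdef
  set J : GaussianInt[X] := C (⟨0,-1⟩) with hJdef
  have hprime : Prime P := prime_CP
  have h2 : (2 : GaussianInt[X]) = P ^ 2 * J := two_eq
  have hJ : J ^ 2 = -1 := J_sq
  have h4P : (4 : GaussianInt[X]) = -(P^4) := by
    linear_combination (2 + P^2*J) * h2 + P^4 * hJ
  have hPu : P ∣ u := by
    refine hprime.dvd_of_dvd_pow (n := 2) ?_
    refine ⟨P * J * (2*w + v*u), ?_⟩
    linear_combination h + (2*w + v*u) * h2
  obtain ⟨G, hG⟩ := hPu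
  have hGG : (P*G)^2 = 4*w + 2*v*(P*G) := by rw [← hG]; exact h
  have hPG : P ∣ G := by
    refine hprime.dvd_of_dvd_pow (n := 2) ?_
    refine ⟨-(P*w) + J*v*G, ?_⟩
    have hP2 : P^2 ≠ 0 := by
      apply pow_ne_zero; rw [hPdef, Ne, C_eq_zero]; decide
    refine mul_left_cancel₀ hP2 ?_
    linear_combination hGG + w*h4P + (v*P*G)*h2
  obtain ⟨H, hH⟩ := hPG
  refine ⟨-(J*H), ?_⟩
  linear_combination hG + P*hH + (J*H)*h2 + P^2*H*hJ

noncomputable def seq (S u0 u1 : GaussianInt[X]) : ℕ → GaussianInt[X]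
  | 0 => u0
  | 1 => u1
  | n+2 => S * seq S u0 u1 (n+1) - seq S u0 u1 n

@[simp] lemma seq_zero (S u0 u1 : GaussianInt[X]) : seq S u0 u1 0 = u0 := rfl
@[simp] lemma seq_one (S u0 u1 : GaussianInt[X]) : seq S u0 u1 1 = u1 := rfl
lemma seq_rec (S u0 u1 : GaussianInt[X]) (n : ℕ) :
    seq S u0 u1 (n+2) = S * seq S u0 u1 (n+1) - seq S u0 u1 n := rfl

noncomputable def Vseq (S u0 u1 w1 : GaussianInt[X]) (m : ℤ) : GaussianInt[X] :=
  if 0 ≤ m then seq S u0 u1 m.toNat else seq S u0 w1 m.natAbs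

lemma Vseq_zero (S u0 u1 w1 : GaussianInt[X]) : Vseq S u0 u1 w1 0 = u0 := rfl
lemma Vseq_one (S u0 u1 w1 : GaussianInt[X]) : Vseq S u0 u1 w1 1 = u1 := rfl

lemma Vseq_rec (S u0 u1 w1 : GaussianInt[X]) (hcross : u1 + w1 = S * u0) (m : ℤ) :
    Vseq S u0 u1 w1 (m+1) + Vseq S u0 u1 w1 (m-1) = S * Vseq S u0 u1 w1 m := by
  unfold Vseq
  rcases lt_trichotomy m 0 with hm | rfl | hm
  · rcases eq_or_lt_of_le (Int.add_one_le_iff.mpr hm) with hm1 | hm1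
    · have : m = -1 := by omega
      subst this
      have e2 : seq S u0 w1 2 = S * w1 - u0 := rfl
      norm_num
      linear_combination e2
    · rw [if_neg (by omega), if_neg (by omega), if_neg (by omega)]
      have h1 : (m-1).natAbs = (m+1).natAbs + 2 := by omega
      have h2 : m.natAbs = (m+1).natAbs + 1 := by omega
      rw [h1, h2, seq_rec]
      ring
  · norm_num
    linear_combination hcross
  · rw [if_pos (by omega), if_pos (by omega), if_pos (by omega)]
    have h1 : (m+1).toNat = (m-1).toNat + 2 := by omega
    have h2 : m.toNat = (m-1).toNat + 1 := by omega
    rw [h1, h2, seq_rec]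
    ring

section Aux
variable {u v w : GaussianInt[X]}

lemma two_ne : (2 : GaussianInt[X]) ≠ 0 := by
  rw [show (2 : GaussianInt[X]) = C 2 from (map_ofNat C 2).symm, Ne, C_eq_zero]; decide

lemma four_ne : (4 : GaussianInt[X]) ≠ 0 := by
  rw [show (4 : GaussianInt[X]) = C 4 from (map_ofNat C 4).symm, Ne, C_eq_zero]; decide

lemma deg_add_four (p : GaussianInt[X]) (h : 0 < p.natDegree) :
    (p + 4).natDegree = p.natDegree := by
  apply natDegree_add_eq_left_of_natDegree_lt
  rwa [natDegree_ofNat]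

lemma add_four_ne (p : GaussianInt[X]) (h : 0 < p.natDegree) : p + 4 ≠ 0 := by
  intro h0
  have := deg_add_four p h
  rw [h0, natDegree_zero] at this
  omega
end Aux

section CoreLemma

lemma core_aux (A K S : GaussianInt[X]) (hA : A ≠ 0) (hK : K ≠ 0)
    (hS : A * K + 4 = S ^ 2)
    (hdeg : A.natDegree ≤ K.natDegree) (hdK : 0 < K.natDegree) :
    ∀ N : ℕ, ∀ z x d : GaussianInt[X], z.natDegree ≤ N →
      K * d + 4 = z ^ 2 → A * d + 4 = x ^ 2 →
    ∃ z0 x0 d0 u1 : GaussianInt[X],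
      (K * d0 + 4 = z0 ^ 2) ∧ (A * d0 + 4 = x0 ^ 2) ∧
      4 * z0.natDegree + A.natDegree ≤ 3 * K.natDegree ∧
      4 * x0.natDegree ≤ A.natDegree + K.natDegree ∧
      S * z0 + K * x0 = 2 * u1 ∧
      ∃ m : ℤ, z = Vseq S z0 u1 (u1 - K * x0) m ∧
        ∃ x', x' ^ 2 = x ^ 2 ∧
          2 * Vseq S z0 u1 (u1 - K * x0) (m + 1) = S * z + K * x' := by
  -- global degree facts
  have hAK : A * K ≠ 0 := mul_ne_zero hA hK
  have hdAK : (A * K).natDegree = A.natDegree + K.natDegree := natDegree_mul hA hK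
  have hdAKpos : 0 < (A * K).natDegree := by omega
  have h2S : 2 * S.natDegree = A.natDegree + K.natDegree := by
    have h1 : (A * K + 4).natDegree = A.natDegree + K.natDegree := by
      rw [deg_add_four _ hdAKpos, hdAK]
    rw [hS] at h1
    rw [natDegree_pow] at h1
    omega
  have hSne : S ≠ 0 := by
    intro h0
    have := add_four_ne (A * K) hdAKpos
    rw [hS, h0] at this
    simp at this
  intro N
  induction N using Nat.strong_induction_on with
  | _ N IH =>
  intro z x d hN hz hx
  by_cases hble : 4 * z.natDegree + A.natDegree ≤ 3 * K.natDegree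
  · -- base case
    -- divisibility of S*z + K*x by 2
    have hid1 : (S*z + K*x)^2 = 4*(z^2 + K*(A-K)) + 2*(K*x)*(S*z + K*x) := by
      linear_combination (-(z^2))*hS - A*K*hz + K^2*hx
    obtain ⟨u1, hu1⟩ := key_dvd _ _ _ hid1
    have hxdeg : 4 * x.natDegree ≤ A.natDegree + K.natDegree := by
      by_cases hd0 : d = 0
      · subst hd0
        have hx4 : x ^ 2 = 4 := by rw [← hx]; ring
        have : 2 * x.natDegree = 0 := by
          rw [← natDegree_pow, hx4, natDegree_ofNat]
        omega
      · by_cases hAd : 0 < (A * d).natDegree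
        · have h2f : 2 * x.natDegree = (A*d).natDegree := by
            rw [← natDegree_pow, ← hx, deg_add_four _ hAd]
          have h2e : 2 * z.natDegree = K.natDegree + d.natDegree := by
            have hKd : 0 < (K*d).natDegree := by
              rw [natDegree_mul hK hd0]; omega
            rw [← natDegree_pow, ← hz, deg_add_four _ hKd, natDegree_mul hK hd0]
          rw [natDegree_mul hA hd0] at h2f
          omega
        · have : (A*d + 4).natDegree = 0 := by
            have h4 : (4 : GaussianInt[X]).natDegree = 0 := by simp
            have := natDegree_add_le (A*d) 4
            omega
          rw [hx, natDegree_pow] at this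
          omega
    refine ⟨z, x, d, u1, hz, hx, hble, hxdeg, hu1, 0, rfl, x, rfl, ?_⟩
    rw [show ((0:ℤ)+1) = 1 from rfl, Vseq_one, ← hu1]
  · -- descent case
    push_neg at hble
    have hbig : 3 * K.natDegree + 1 ≤ 4 * z.natDegree + A.natDegree := hble
    have hd0 : d ≠ 0 := by
      intro h0
      subst h0
      have hz4 : z ^ 2 = 4 := by rw [← hz]; ring
      have : 2 * z.natDegree = 0 := by rw [← natDegree_pow, hz4, natDegree_ofNat]
      omega
    have hKd : (K*d).natDegree = K.natDegree + d.natDegree := natDegree_mul hK hd0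
    have hKdpos : 0 < (K*d).natDegree := by omega
    have h2e : 2 * z.natDegree = K.natDegree + d.natDegree := by
      rw [← natDegree_pow, ← hz, deg_add_four _ hKdpos, hKd]
    have hzne : z ≠ 0 := by
      intro h0
      rw [h0] at h2e
      simp at h2e
      omega
    -- choose sign of x
    obtain ⟨xt, hxt, hxtsq, hcmp⟩ :
        ∃ xt, A * d + 4 = xt ^ 2 ∧ xt ^ 2 = x ^ 2 ∧
          (S*z - K*xt).natDegree ≤ (S*z + K*xt).natDegree := by
      rcases le_total ((S*z - K*x).natDegree) ((S*z + K*x).natDegree) with h | h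
      · exact ⟨x, hx, rfl, h⟩
      · refine ⟨-x, by rw [neg_pow]; simpa using hx, by ring, ?_⟩
        rw [show S*z - K*(-x) = S*z + K*x by ring, show S*z + K*(-x) = S*z - K*x by ring]
        exact h
    clear hx
    -- product identity
    have huu : (S*z + K*xt) * (S*z - K*xt) = 4*(K*(d + A - K) + 4) := by
      linear_combination (-(z^2))*hS - (A*K+4)*hz + K^2*hxt
    have hprod_ne : (4 : GaussianInt[X])*(K*(d + A - K) + 4) ≠ 0 := by
      by_cases hw : d + A - K = 0
      · rw [hw, mul_zero, zero_add]
        intro h0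
        exact four_ne (by
          have : (4:GaussianInt[X]) * 4 = 0 := h0
          rcases mul_eq_zero.mp this with h|h <;> exact h)
      · apply mul_ne_zero four_ne
        apply add_four_ne
        rw [natDegree_mul hK hw]
        omega
    have hup_ne : S*z + K*xt ≠ 0 := fun h0 => hprod_ne (by rw [← huu, h0, zero_mul])
    have hum_ne : S*z - K*xt ≠ 0 := fun h0 => hprod_ne (by rw [← huu, h0, mul_zero])
    have hDsum : (S*z + K*xt).natDegree + (S*z - K*xt).natDegree
        ≤ K.natDegree + max d.natDegree K.natDegree := by
      have hmm : ((4:GaussianInt[X])*(K*(d + A - K) + 4)).natDegree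
          ≤ K.natDegree + max d.natDegree K.natDegree := by
        by_cases hw : d + A - K = 0
        · rw [hw, mul_zero, zero_add]
          have : ((4:GaussianInt[X])*4).natDegree = 0 := by
            rw [show (4:GaussianInt[X])*4 = 16 by norm_num, natDegree_ofNat]
          omega
        · have h1 : (d + A - K).natDegree ≤ max d.natDegree K.natDegree := by
            have h2 : (A - K).natDegree ≤ K.natDegree :=
              le_trans (natDegree_sub_le _ _) (by omega)
            have h3 := natDegree_add_le d (A - K)
            have h4 : d + A - K = d + (A - K) := by ring
            rw [h4]
            rcases le_total d.natDegree K.natDegree with h|h <;>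
              simp only [max_def] at * <;> split_ifs at * <;> omega
          calc ((4:GaussianInt[X])*(K*(d + A - K) + 4)).natDegree
              ≤ (4:GaussianInt[X]).natDegree + (K*(d + A - K) + 4).natDegree :=
                natDegree_mul_le
            _ ≤ K.natDegree + max d.natDegree K.natDegree := by
                have h5 : (K*(d + A - K) + 4).natDegree ≤ K.natDegree + (d + A - K).natDegree := by
                  have := natDegree_add_le (K*(d + A - K)) 4
                  have h6 : (K*(d+A-K)).natDegree = K.natDegree + (d+A-K).natDegree :=
                    natDegree_mul hK hw
                  have h7 : (4 : GaussianInt[X]).natDegree = 0 := by simp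
                  omega
                have h8 : (4 : GaussianInt[X]).natDegree = 0 := by simp
                omega
      rw [← natDegree_mul hup_ne hum_ne, huu]
      exact hmm
    have hmax : S.natDegree + z.natDegree ≤ (S*z + K*xt).natDegree := by
      have h1 : (2*(S*z)).natDegree = S.natDegree + z.natDegree := by
        rw [natDegree_mul two_ne (mul_ne_zero hSne hzne), natDegree_mul hSne hzne,
          natDegree_ofNat]
        omega
      have h2 : (2*(S*z)) = (S*z + K*xt) + (S*z - K*xt) := by ring
      have h3 := natDegree_add_le (S*z + K*xt) (S*z - K*xt)
      rw [← h2, h1] at h3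
      rcases max_cases ((S*z + K*xt).natDegree) ((S*z - K*xt).natDegree) with ⟨h4,_⟩|⟨h4,_⟩ <;>
        omega
    -- divisibilities
    have hid1 : (S*z + K*xt)^2 = 4*(z^2 + K*(A-K)) + 2*(K*xt)*(S*z + K*xt) := by
      linear_combination (-(z^2))*hS - A*K*hz + K^2*hxt
    obtain ⟨w1, hw1⟩ := key_dvd _ _ _ hid1
    obtain ⟨zm, hzm⟩ : ∃ zm, S*z - K*xt = 2*zm := by
      refine ⟨w1 - K*xt, ?_⟩
      linear_combination hw1
    have hid2 : (S*xt + A*z)^2 = 4*(xt^2 - A*(A-K)) + 2*(A*z)*(S*xt + A*z) := by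
      linear_combination (-(xt^2))*hS - A*K*hxt + A^2*hz
    obtain ⟨w2, hw2⟩ := key_dvd _ _ _ hid2
    obtain ⟨xm, hxm⟩ : ∃ xm, S*xt - A*z = 2*xm := by
      refine ⟨w2 - A*z, ?_⟩
      linear_combination hw2
    have hid3 : (S*z*xt - A*K*d)^2
        = 4*(A*K^2*d + A^2*K*d + A*K*d^2 + 4*A*K + 4*K*d + 4*A*d + 16)
          + 2*(-(A*K*d))*(S*z*xt - A*K*d) := by
      linear_combination (-(z^2*xt^2))*hS + (-16 - 4*A*d - A*K*xt^2)*hz + (-(4*z^2) - 4*A*K - A*K^2*d)*hxt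
    obtain ⟨q, hq⟩ := key_dvd _ _ _ hid3
    have hKdm : K*(A + d + K - q) + 4 = zm^2 := by
      have h4 : (4:GaussianInt[X])*(K*(A + d + K - q) + 4) = 4*zm^2 := by
        linear_combination (2*zm + S*z - K*xt)*hzm + (2*K)*hq + (z^2)*hS + (4 + A*K)*hz + (K^2)*hxt
      exact mul_left_cancel₀ four_ne h4
    have hAdm : A*(A + d + K - q) + 4 = xm^2 := by
      have h4 : (4:GaussianInt[X])*(A*(A + d + K - q) + 4) = 4*xm^2 := by
        linear_combination (2*xm + S*xt - A*z)*hxm + (2*A)*hq + (xt^2)*hS + (4 + A*K)*hxt + (A^2)*hz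
      exact mul_left_cancel₀ four_ne h4
    have h2z : 2*z = S*zm + K*xm := by
      have h4 : (2:GaussianInt[X])*(2*z) = 2*(S*zm + K*xm) := by
        linear_combination S*hzm + K*hxm + z*hS
      exact mul_left_cancel₀ two_ne h4
    -- degree drop
    have hdrop : zm.natDegree < z.natDegree := by
      have he1 : 1 ≤ z.natDegree := by omega
      by_cases hzm0 : zm = 0
      · rw [hzm0, natDegree_zero]; omega
      · have hdm_eq : zm.natDegree = (S*z - K*xt).natDegree := by
          rw [hzm, natDegree_mul two_ne hzm0, natDegree_ofNat]
          omega
        rcases le_total d.natDegree K.natDegree with hdk | hdk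
        · have hmx : max d.natDegree K.natDegree = K.natDegree := max_eq_right hdk
          rw [hmx] at hDsum
          omega
        · have hmx : max d.natDegree K.natDegree = d.natDegree := max_eq_left hdk
          rw [hmx] at hDsum
          omega
    -- apply induction hypothesis
    obtain ⟨z0, x0, d0, u1, hd0K, hd0A, hdegz0, hdegx0, hu1, m, hVm, x', hx'sq, hnext⟩ :=
      IH zm.natDegree (by omega) zm xm (A + d + K - q) le_rfl hKdm hAdm
    have hcross : u1 + (u1 - K*x0) = S*z0 := by linear_combination -hu1
    have hVrec := Vseq_rec S z0 u1 (u1 - K*x0) hcross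
    -- split on the sign of x'
    have hsplit : (x' - xm) * (x' + xm) = 0 := by linear_combination hx'sq
    rcases mul_eq_zero.mp hsplit with hcase | hcase
    · -- x' = xm
      have hx'eq : x' = xm := by linear_combination hcase
      subst hx'eq
      have hVm1 : Vseq S z0 u1 (u1 - K*x0) (m+1) = z := by
        apply mul_left_cancel₀ two_ne
        rw [hnext, ← h2z]
      refine ⟨z0, x0, d0, u1, hd0K, hd0A, hdegz0, hdegx0, hu1, m+1, hVm1.symm, xt, hxtsq, ?_⟩
      have hrec := hVrec (m+1)
      rw [show m+1-1 = m from by ring] at hrec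
      have : 2 * Vseq S z0 u1 (u1 - K*x0) (m+1+1)
          = 2*(S * Vseq S z0 u1 (u1-K*x0) (m+1)) - 2*Vseq S z0 u1 (u1-K*x0) m := by
        linear_combination 2*hrec
      rw [this, hVm1, ← hVm]
      linear_combination hzm
    · -- x' = -xm
      have hx'eq : x' = -xm := by linear_combination hcase
      subst hx'eq
      have hVm1 : Vseq S z0 u1 (u1 - K*x0) (m-1) = z := by
        have hrec := hVrec m
        have h2 : 2 * Vseq S z0 u1 (u1 - K*x0) (m-1)
            = 2*(S * Vseq S z0 u1 (u1-K*x0) m) - 2*Vseq S z0 u1 (u1-K*x0) (m+1) := by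
          linear_combination 2*hrec
        apply mul_left_cancel₀ two_ne
        rw [h2, hnext, ← hVm]
        linear_combination -h2z
      refine ⟨z0, x0, d0, u1, hd0K, hd0A, hdegz0, hdegx0, hu1, m-1, hVm1.symm, -xt, by
        rw [neg_pow]; simpa using hxtsq, ?_⟩
      rw [show m-1+1 = m from by ring, ← hVm]
      linear_combination -hzm
lemma core (A K S : GaussianInt[X]) (hA : A ≠ 0) (hK : K ≠ 0)
    (hS : A * K + 4 = S ^ 2)
    (hdeg : A.natDegree ≤ K.natDegree) (hdK : 0 < K.natDegree)
    (d z x : GaussianInt[X])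
    (hz : K * d + 4 = z ^ 2) (hx : A * d + 4 = x ^ 2) :
    ∃ z0 x0 : GaussianInt[X],
      A * z0 ^ 2 - K * x0 ^ 2 = 4 * (A - K) ∧
      4 * z0.natDegree + A.natDegree ≤ 3 * K.natDegree ∧
      4 * x0.natDegree ≤ A.natDegree + K.natDegree ∧
      (∃ d0 : GaussianInt[X], K * d0 + 4 = z0 ^ 2 ∧ A * d0 + 4 = x0 ^ 2) ∧
      (∃ (m : ℕ) (v : ℕ → GaussianInt[X]),
        v 0 = z0 ∧ 2 * v 1 = S * z0 + K * x0 ∧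
        (∀ k, v (k + 2) = S * v (k + 1) - v k) ∧ z = v m) := by
  obtain ⟨z0, x0, d0, u1, hd0K, hd0A, hdegz0, hdegx0, hu1, m, hVm, -⟩ :=
    core_aux A K S hA hK hS hdeg hdK z.natDegree z x d le_rfl hz hx
  by_cases hm : 0 ≤ m
  · refine ⟨z0, x0, by linear_combination (-A)*hd0K + K*hd0A, hdegz0, hdegx0,
      ⟨d0, hd0K, hd0A⟩, m.toNat, seq S z0 u1, rfl, ?_, fun k => seq_rec S z0 u1 k, ?_⟩
    · rw [seq_one]; linear_combination -hu1
    · rw [hVm]; unfold Vseq; rw [if_pos hm]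
  · refine ⟨z0, -x0, by linear_combination (-A)*hd0K + K*hd0A, hdegz0,
      by rw [natDegree_neg]; exact hdegx0,
      ⟨d0, hd0K, by rw [neg_pow]; simpa using hd0A⟩,
      m.natAbs, seq S z0 (u1 - K*x0), rfl, ?_, fun k => seq_rec S z0 _ k, ?_⟩
    · rw [seq_one]; linear_combination -hu1
    · rw [hVm]; unfold Vseq; rw [if_neg hm]

end CoreLemma

/-- Solutions of the Pellian equations attached to a D(4)-triple in ℤ[i][X]
come from binary recurrence sequences with small initial terms. -/
theorem pellian_solutions_from_recurrences
    (a b c r s t : GaussianInt[X])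
    (ha : a ≠ 0) (hb : b ≠ 0) (hc : c ≠ 0)
    (hab : a ≠ b) (hac : a ≠ c) (hbc : b ≠ c)
    (hr : a * b + 4 = r ^ 2) (hs : a * c + 4 = s ^ 2) (ht : b * c + 4 = t ^ 2)
    (hαβ : a.natDegree ≤ b.natDegree) (hβγ : b.natDegree ≤ c.natDegree)
    (hβ : 0 < b.natDegree) (hγ : 0 < c.natDegree)
    (d x y z : GaussianInt[X])
    (hx : a * d + 4 = x ^ 2) (hy : b * d + 4 = y ^ 2) (hz : c * d + 4 = z ^ 2) :
    (∃ z0 x0 : GaussianInt[X],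
      a * z0 ^ 2 - c * x0 ^ 2 = 4 * (a - c) ∧
      4 * z0.natDegree + a.natDegree ≤ 3 * c.natDegree ∧
      4 * x0.natDegree ≤ a.natDegree + c.natDegree ∧
      (∃ d0 : GaussianInt[X], c * d0 + 4 = z0 ^ 2 ∧ a * d0 + 4 = x0 ^ 2) ∧
      (∃ (m : ℕ) (v : ℕ → GaussianInt[X]),
        v 0 = z0 ∧ 2 * v 1 = s * z0 + c * x0 ∧
        (∀ k, v (k + 2) = s * v (k + 1) - v k) ∧ z = v m)) ∧
    (∃ z1 y1 : GaussianInt[X],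
      b * z1 ^ 2 - c * y1 ^ 2 = 4 * (b - c) ∧
      4 * z1.natDegree + b.natDegree ≤ 3 * c.natDegree ∧
      4 * y1.natDegree ≤ b.natDegree + c.natDegree ∧
      (∃ d1 : GaussianInt[X], c * d1 + 4 = z1 ^ 2 ∧ b * d1 + 4 = y1 ^ 2) ∧
      (∃ (n : ℕ) (w : ℕ → GaussianInt[X]),
        w 0 = z1 ∧ 2 * w 1 = t * z1 + c * y1 ∧
        (∀ k, w (k + 2) = t * w (k + 1) - w k) ∧ z = w n)) := by
  exact ⟨core a c s ha hc hs (le_trans hαβ hβγ) hγ d z x hz hx,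
    core b c t hb hc ht hβγ hγ d z y hz hy⟩
end

section
/- (i) If z, x ∈ ℤ[i][X] satisfy a*z^2 − c*x^2 = 4*(a − c) and c divides z^2 − 4, then a divides x^2 − 4. (ii) If z, y ∈ ℤ[i][X] satisfy b*z^2 − c*y^2 = 4*(b − c) and c divides z^2 − 4, then b divides y^2 − 4. (iii) If z ∈ ℤ[i][X] is nonconstant (deg(z) > 0) and c divides z^2 − 4, then 2*deg(z) ≥ γ. -/
open Polynomial

lemma pellian_aux (a c : GaussianInt[X]) (hc : c ≠ 0)
    (z x : GaussianInt[X])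
    (heq : a * z ^ 2 - c * x ^ 2 = 4 * (a - c)) (hdvd : c ∣ z ^ 2 - 4) :
    a ∣ x ^ 2 - 4 := by
  obtain ⟨w, hw⟩ := hdvd
  refine ⟨w, ?_⟩
  have key : c * (x ^ 2 - 4) = c * (a * w) := by
    linear_combination a * hw - heq
  exact mul_left_cancel₀ hc key

/-- Congruence properties of solutions of the Pellian equations attached to a
D(4)-triple in ℤ[i][X], and a degree lower bound. -/
theorem pellian_congruence_properties
    (a b c r s t : GaussianInt[X])
    (ha : a ≠ 0) (hb : b ≠ 0) (hc : c ≠ 0)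
    (hab : a ≠ b) (hac : a ≠ c) (hbc : b ≠ c)
    (hr : a * b + 4 = r ^ 2) (hs : a * c + 4 = s ^ 2) (ht : b * c + 4 = t ^ 2)
    (hαβ : a.natDegree ≤ b.natDegree) (hβγ : b.natDegree ≤ c.natDegree)
    (hβ : 0 < b.natDegree) (hγ : 0 < c.natDegree) :
    (∀ z x : GaussianInt[X],
      a * z ^ 2 - c * x ^ 2 = 4 * (a - c) → c ∣ z ^ 2 - 4 → a ∣ x ^ 2 - 4) ∧
    (∀ z y : GaussianInt[X],
      b * z ^ 2 - c * y ^ 2 = 4 * (b - c) → c ∣ z ^ 2 - 4 → b ∣ y ^ 2 - 4) ∧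
    (∀ z : GaussianInt[X],
      0 < z.natDegree → c ∣ z ^ 2 - 4 → c.natDegree ≤ 2 * z.natDegree) := by
  refine ⟨fun z x heq hd => pellian_aux a c hc z x heq hd,
    fun z y heq hd => pellian_aux b c hc z y heq hd, fun z hz hd => ?_⟩
  have hzne : z ^ 2 - 4 ≠ 0 := by
    intro h
    have h2 : z ^ 2 = 4 := by linear_combination h
    have : (z ^ 2).natDegree = 0 := by rw [h2]; simp
    rw [natDegree_pow] at this
    omega
  calc c.natDegree ≤ (z ^ 2 - 4).natDegree := natDegree_le_of_dvd hd hzne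
    _ ≤ max (z ^ 2).natDegree (4 : GaussianInt[X]).natDegree := natDegree_sub_le _ _
    _ ≤ 2 * z.natDegree := by
        simp [natDegree_pow]
end

section
/- If m and n are nonnegative integers with v_m = w_n, then n ≤ m + 1 and m ≤ 2n + 1. -/
open Polynomial

namespace IndexIneqAux

local notation "R" => GaussianInt

lemma two_nd : (2 : R[X]).natDegree = 0 := by
  rw [(map_ofNat (C : R →+* _) 2).symm, natDegree_C]

lemma core (e c s z x d : R[X]) (u : ℕ → R[X])
    (he : e ≠ 0) (hc : c ≠ 0) (hec : e ≠ c)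
    (hG : 0 < c.natDegree) (hEG : e.natDegree ≤ c.natDegree)
    (hs : e * c + 4 = s ^ 2)
    (hz : e * z ^ 2 - c * x ^ 2 = 4 * (e - c))
    (hzdeg : 4 * z.natDegree + e.natDegree ≤ 3 * c.natDegree)
    (hxdeg : 4 * x.natDegree ≤ e.natDegree + c.natDegree)
    (hdc : c * d + 4 = z ^ 2) (hde : e * d + 4 = x ^ 2)
    (hu0 : u 0 = z) (hu1 : 2 * u 1 = s * z + c * x)
    (hrec : ∀ k, u (k + 2) = s * u (k + 1) - u k) :
    (∀ k, 4 * (u k).natDegree + e.natDegree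
        ≤ 3 * c.natDegree + 2 * k * (e.natDegree + c.natDegree)) ∧
    (∀ k, 3 * c.natDegree + 1 + 2 * k * (e.natDegree + c.natDegree)
        ≤ 4 * (u (k + 2)).natDegree) := by
  have h4 : (4 : R[X]) ≠ 0 := by norm_num
  have h2 : (2 : R[X]) ≠ 0 := by norm_num
  -- degree of s
  have hecd : (e * c).natDegree = e.natDegree + c.natDegree := natDegree_mul he hc
  have hec4 : (e * c + 4).natDegree = e.natDegree + c.natDegree := by
    rw [show (4 : R[X]) = C 4 from (map_ofNat C 4).symm, natDegree_add_C, hecd]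
  have hsne : s ≠ 0 := by
    intro h
    have h0 : e * c + 4 = 0 := by rw [hs, h]; ring
    have := congrArg natDegree h0
    rw [hec4, natDegree_zero] at this
    omega
  have hsdeg : 2 * s.natDegree = e.natDegree + c.natDegree := by
    have := congrArg natDegree hs
    rw [hec4, natDegree_pow] at this
    omega
  have hS1 : 1 ≤ s.natDegree := by omega
  -- z ≠ 0
  have hzne : z ≠ 0 := by
    intro h
    rw [h] at hdc
    have hcd : c * d = -4 := by linear_combination hdc
    by_cases hd : d = 0
    · rw [hd, mul_zero] at hcd
      exact h4 (by linear_combination hcd)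
    · have h1 : (c * d).natDegree = c.natDegree + d.natDegree := natDegree_mul hc hd
      rw [hcd] at h1
      have h2' : ((-4 : R[X])).natDegree = 0 := by
        rw [natDegree_neg]; exact natDegree_ofNat 4
      omega
  have hu0ne : u 0 ≠ 0 := by rw [hu0]; exact hzne
  -- u 1 ≠ 0
  have hu1ne : u 1 ≠ 0 := by
    intro h
    rw [h, mul_zero] at hu1
    have hmain : (4 : R[X]) * (c * (e + d - c)) = 4 * (-4) := by
      linear_combination (c*d+4) * hs + s^2 * hdc - c^2 * hde - (s*z - c*x) * hu1
    have hkey : c * (e + d - c) = -4 := mul_left_cancel₀ h4 hmain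
    by_cases h0 : e + d - c = 0
    · rw [h0, mul_zero] at hkey
      exact h4 (by linear_combination hkey)
    · have h1 : (c * (e + d - c)).natDegree = c.natDegree + (e + d - c).natDegree :=
        natDegree_mul hc h0
      rw [hkey] at h1
      have h2' : ((-4 : R[X])).natDegree = 0 := by
        rw [natDegree_neg]; exact natDegree_ofNat 4
      omega
  -- the invariant
  have hQ : ∀ k, (u (k+1))^2 - s * u k * u (k+1) + (u k)^2 = c * (c - e) := by
    intro k
    induction k with
    | zero =>
      have h44 : (4:R[X]) * ((u 1)^2 - s * u 0 * u 1 + (u 0)^2) = 4 * (c * (c - e)) := by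
        rw [hu0]
        linear_combination (2 * u 1 - s * z + c * x) * hu1 + z^2 * hs - c * hz
      exact mul_left_cancel₀ h4 h44
    | succ n ih =>
      rw [hrec n]
      linear_combination ih
  have idq : ∀ k, u (k+2) * u k = (u (k+1))^2 + c * (e - c) := by
    intro k
    have h1 : (u (k+2))^2 - s * u (k+1) * u (k+2) + (u (k+1))^2 = c * (c - e) := hQ (k+1)
    rw [hrec k] at h1 ⊢
    linear_combination -h1
  -- the growth chain
  have chain : ∀ j, u j ≠ 0 → u (j+1) ≠ 0 →
      (u j).natDegree < s.natDegree + (u (j+1)).natDegree →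
      ∀ i, u (j+i+1) ≠ 0 ∧
        (u (j+i+1)).natDegree = (u (j+1)).natDegree + i * s.natDegree ∧
        (u (j+i)).natDegree < s.natDegree + (u (j+i+1)).natDegree ∧ u (j+i) ≠ 0 := by
    intro j hj hj1 hlt i
    induction i with
    | zero => exact ⟨hj1, by simp, hlt, hj⟩
    | succ i ih =>
      obtain ⟨h1, hdeg, h3, h4'⟩ := ih
      have hval : u (j+(i+1)+1) = s * u (j+i+1) - u (j+i) := hrec (j+i)
      have hmul : (s * u (j+i+1)).natDegree = s.natDegree + (u (j+i+1)).natDegree :=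
        natDegree_mul hsne h1
      have hsubd : (u (j+(i+1)+1)).natDegree = s.natDegree + (u (j+i+1)).natDegree := by
        rw [hval, natDegree_sub_eq_left_of_natDegree_lt (by omega), hmul]
      have hne2 : u (j+(i+1)+1) ≠ 0 := by
        intro h0
        rw [h0, natDegree_zero] at hsubd
        omega
      refine ⟨hne2, ?_, ?_, h1⟩
      · rw [hsubd, hdeg]; ring
      · show (u (j+i+1)).natDegree < s.natDegree + (u (j+(i+1)+1)).natDegree
        rw [hsubd]
        omega
  -- upper bound for deg (u 1)
  have hu1d : (u 1).natDegree ≤ max (s.natDegree + z.natDegree) (c.natDegree + x.natDegree) := by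
    have h21 : (2 * u 1).natDegree = (u 1).natDegree := by
      rw [natDegree_mul h2 hu1ne, two_nd, zero_add]
    rw [← h21, hu1]
    refine (natDegree_add_le _ _).trans ?_
    exact max_le_max natDegree_mul_le natDegree_mul_le
  -- C1 : the uniform upper bound
  have C1 : ∀ k, 4 * (u k).natDegree + e.natDegree
      ≤ 3 * c.natDegree + 2 * k * (e.natDegree + c.natDegree) := by
    have base0 : 4 * (u 0).natDegree + e.natDegree
        ≤ 3 * c.natDegree + 2 * 0 * (e.natDegree + c.natDegree) := by
      rw [hu0]; simpa using hzdeg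
    have base1 : 4 * (u 1).natDegree + e.natDegree
        ≤ 3 * c.natDegree + 2 * 1 * (e.natDegree + c.natDegree) := by
      rcases le_max_iff.mp hu1d with h | h <;> omega
    have key : ∀ k, (4 * (u k).natDegree + e.natDegree
          ≤ 3 * c.natDegree + 2 * k * (e.natDegree + c.natDegree)) ∧
        (4 * (u (k+1)).natDegree + e.natDegree
          ≤ 3 * c.natDegree + 2 * (k+1) * (e.natDegree + c.natDegree)) := by
      intro k
      induction k with
      | zero => exact ⟨base0, base1⟩
      | succ n ih =>
        refine ⟨ih.2, ?_⟩
        have hd : (u (n+2)).natDegree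
            ≤ max (s.natDegree + (u (n+1)).natDegree) ((u n).natDegree) := by
          rw [hrec n]
          refine (natDegree_sub_le _ _).trans ?_
          exact max_le_max natDegree_mul_le le_rfl
        have e1 : 2*(n+1+1)*(e.natDegree + c.natDegree)
            = 2*(n+1)*(e.natDegree + c.natDegree) + 2*(e.natDegree + c.natDegree) := by ring
        have e2 : 2*(n+1)*(e.natDegree + c.natDegree)
            = 2*n*(e.natDegree + c.natDegree) + 2*(e.natDegree + c.natDegree) := by ring
        have i1 := ih.1
        have i2 := ih.2
        show 4 * (u (n+2)).natDegree + e.natDegree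
          ≤ 3 * c.natDegree + 2*(n+1+1)*(e.natDegree + c.natDegree)
        rcases le_max_iff.mp hd with h | h
        · linarith
        · linarith
    exact fun k => (key k).1
  -- extraction from the identity
  have extract : e.natDegree < c.natDegree → 2 * (u 1).natDegree < 2 * c.natDegree →
      u 2 ≠ 0 ∧ (u 2).natDegree + (u 0).natDegree = 2 * c.natDegree := by
    intro hElt hlt
    have hecne : e - c ≠ 0 := sub_ne_zero.mpr hec
    have hEC : (e - c).natDegree = c.natDegree :=
      natDegree_sub_eq_right_of_natDegree_lt hElt
    have hcec : (c * (e - c)).natDegree = 2 * c.natDegree := by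
      rw [natDegree_mul hc hecne, hEC]; ring
    have hltd : ((u 1)^2).natDegree < (c * (e - c)).natDegree := by
      rw [natDegree_pow, hcec]; omega
    have hadd : ((u 1)^2 + c * (e - c)).natDegree = 2 * c.natDegree := by
      rw [natDegree_add_eq_right_of_natDegree_lt hltd, hcec]
    have hne0 : (u 1)^2 + c * (e - c) ≠ 0 := by
      intro h0
      have h1 : c * (e - c) = -(u 1)^2 := by linear_combination h0
      have h2' := congrArg natDegree h1
      rw [hcec, natDegree_neg, natDegree_pow] at h2'
      omega
    have hid := idq 0
    have hprod : u 2 * u 0 ≠ 0 := by rw [hid]; exact hne0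
    have hu2 : u 2 ≠ 0 := fun h0 => hprod (by rw [h0, zero_mul])
    refine ⟨hu2, ?_⟩
    rw [← natDegree_mul hu2 hu0ne, hid, hadd]
  -- C2 : the lower bound
  have hz0' : (u 0).natDegree = z.natDegree := by rw [hu0]
  have C2 : ∀ k, 3 * c.natDegree + 1 + 2 * k * (e.natDegree + c.natDegree)
      ≤ 4 * (u (k+2)).natDegree := by
    by_cases hgood : (u 0).natDegree < s.natDegree + (u 1).natDegree
    · -- growth from index 0 on
      have hch := chain 0 hu0ne hu1ne hgood
      have hkey : c.natDegree + 1 ≤ 4 * (u 1).natDegree + 2 * e.natDegree := by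
        by_cases hEq : e.natDegree = c.natDegree
        · omega
        · have hElt : e.natDegree < c.natDegree := by omega
          by_contra hsmall
          push_neg at hsmall
          have hlt2G : 2 * (u 1).natDegree < 2 * c.natDegree := by omega
          obtain ⟨hu2, hsum⟩ := extract hElt hlt2G
          obtain ⟨-, hdeg2, -, -⟩ := hch 1
          simp only [Nat.zero_add] at hdeg2
          rw [show (1:ℕ)+1 = 2 from rfl] at hdeg2
          omega
      intro k
      obtain ⟨-, hdegk, -, -⟩ := hch (k+1)
      simp only [Nat.zero_add] at hdegk
      rw [show k+1+1 = k+2 from rfl] at hdegk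
      have e1 : 4*((u 1).natDegree + (k+1)*s.natDegree)
          = 4*(u 1).natDegree + 2*(k+1)*(2*s.natDegree) := by ring
      have e2 : 2*(k+1)*(2*s.natDegree) = 2*(k+1)*(e.natDegree + c.natDegree) := by
        rw [hsdeg]
      have e3 : 2*(k+1)*(e.natDegree + c.natDegree)
          = 2*k*(e.natDegree + c.natDegree) + 2*(e.natDegree + c.natDegree) := by ring
      rw [hdegk]
      linarith
    · push_neg at hgood
      have hElt : e.natDegree < c.natDegree := by omega
      have hlt2G : 2 * (u 1).natDegree < 2 * c.natDegree := by omega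
      obtain ⟨hu2, hsum⟩ := extract hElt hlt2G
      have hgood1 : (u 1).natDegree < s.natDegree + (u 2).natDegree := by omega
      have hch := chain 1 hu1ne hu2 hgood1
      intro k
      obtain ⟨-, hdegk, -, -⟩ := hch k
      rw [show 1+k+1 = k+2 by omega] at hdegk
      rw [show (1:ℕ)+1 = 2 from rfl] at hdegk
      have e1 : 4*((u 2).natDegree + k*s.natDegree)
          = 4*(u 2).natDegree + 2*k*(2*s.natDegree) := by ring
      have e2 : 2*k*(2*s.natDegree) = 2*k*(e.natDegree + c.natDegree) := by
        rw [hsdeg]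
      rw [hdegk]
      linarith
  exact ⟨C1, C2⟩

end IndexIneqAux

/-- If v_m = w_n then n - 1 ≤ m ≤ 2n + 1. -/
theorem index_inequality_for_equal_terms
    (a b c r s t : GaussianInt[X])
    (ha : a ≠ 0) (hb : b ≠ 0) (hc : c ≠ 0)
    (hab : a ≠ b) (hac : a ≠ c) (hbc : b ≠ c)
    (hr : a * b + 4 = r ^ 2) (hs : a * c + 4 = s ^ 2) (ht : b * c + 4 = t ^ 2)
    (hαβ : a.natDegree ≤ b.natDegree) (hβγ : b.natDegree ≤ c.natDegree)
    (hβ : 0 < b.natDegree) (hγ : 0 < c.natDegree)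
    (z0 x0 d0 : GaussianInt[X]) (v : ℕ → GaussianInt[X])
    (hz0 : a * z0 ^ 2 - c * x0 ^ 2 = 4 * (a - c))
    (hz0deg : 4 * z0.natDegree + a.natDegree ≤ 3 * c.natDegree)
    (hx0deg : 4 * x0.natDegree ≤ a.natDegree + c.natDegree)
    (hd0c : c * d0 + 4 = z0 ^ 2) (hd0a : a * d0 + 4 = x0 ^ 2)
    (hv0 : v 0 = z0) (hv1 : 2 * v 1 = s * z0 + c * x0)
    (hvrec : ∀ k, v (k + 2) = s * v (k + 1) - v k)
    (z1 y1 d1 : GaussianInt[X]) (w : ℕ → GaussianInt[X])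
    (hz1 : b * z1 ^ 2 - c * y1 ^ 2 = 4 * (b - c))
    (hz1deg : 4 * z1.natDegree + b.natDegree ≤ 3 * c.natDegree)
    (hy1deg : 4 * y1.natDegree ≤ b.natDegree + c.natDegree)
    (hd1c : c * d1 + 4 = z1 ^ 2) (hd1b : b * d1 + 4 = y1 ^ 2)
    (hw0 : w 0 = z1) (hw1 : 2 * w 1 = t * z1 + c * y1)
    (hwrec : ∀ k, w (k + 2) = t * w (k + 1) - w k)
    (m n : ℕ) (heq : v m = w n) :
    n ≤ m + 1 ∧ m ≤ 2 * n + 1 := by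
  obtain ⟨cv1, cv2⟩ := IndexIneqAux.core a c s z0 x0 d0 v ha hc hac hγ (hαβ.trans hβγ)
    hs hz0 hz0deg hx0deg hd0c hd0a hv0 hv1 hvrec
  obtain ⟨cw1, cw2⟩ := IndexIneqAux.core b c t z1 y1 d1 w hb hc hbc hγ hβγ
    ht hz1 hz1deg hy1deg hd1c hd1b hw0 hw1 hwrec
  have hdeg : (v m).natDegree = (w n).natDegree := by rw [heq]
  constructor
  · by_contra hcon
    push_neg at hcon
    obtain ⟨nn, rfl⟩ : ∃ nn, n = nn + 2 := ⟨n - 2, by omega⟩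
    have hmn : m ≤ nn := by omega
    have h1 := cw2 nn
    have h2 := cv1 m
    have hmono : 2 * m * (a.natDegree + c.natDegree)
        ≤ 2 * nn * (b.natDegree + c.natDegree) :=
      Nat.mul_le_mul (by omega) (by omega)
    rw [← hdeg] at h1
    linarith
  · by_contra hcon
    push_neg at hcon
    obtain ⟨mm, rfl⟩ : ∃ mm, m = mm + 2 := ⟨m - 2, by omega⟩
    have hmn : 2 * n ≤ mm := by omega
    have h1 := cv2 mm
    have h2 := cw1 n
    have hmono : 2 * n * (b.natDegree + c.natDegree)
        ≤ 2 * mm * (a.natDegree + c.natDegree) := by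
      calc 2 * n * (b.natDegree + c.natDegree)
          ≤ (2 * n) * (2 * (a.natDegree + c.natDegree)) :=
            Nat.mul_le_mul le_rfl (by omega)
        _ = 2 * (2 * n) * (a.natDegree + c.natDegree) := by ring
        _ ≤ 2 * mm * (a.natDegree + c.natDegree) :=
            Nat.mul_le_mul (by omega) le_rfl
    rw [hdeg] at h1
    linarith
end

section
/- For every m ≥ 0, c divides v_{2m} − z0 and c divides v_{2m+1} − v_1; for every n ≥ 0, c divides w_{2n} − z1 and c divides w_{2n+1} − w_1. -/
open Polynomial

namespace CongrAux

/-- The Gaussian prime 1 + i. -/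
def pii : GaussianInt := ⟨1, 1⟩

set_option synthInstance.maxHeartbeats 1000000 in
lemma prime_pii : Prime pii := by
  rw [← irreducible_iff_prime]
  constructor
  · rw [← Zsqrtd.norm_eq_one_iff]
    decide
  · intro x y hxy
    have h : x.norm * y.norm = 2 := by
      rw [← Zsqrtd.norm_mul, ← hxy]; decide
    have h' : x.norm.natAbs * y.norm.natAbs = 2 := by
      rw [← Int.natAbs_mul, h]; rfl
    have hdvd : x.norm.natAbs ∣ 2 := ⟨_, h'.symm⟩
    have hx : x.norm.natAbs = 1 ∨ y.norm.natAbs = 1 := by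
      rcases Nat.prime_two.eq_one_or_self_of_dvd _ hdvd with h1 | h1
      · exact Or.inl h1
      · rw [h1] at h'; omega
    rcases hx with hx | hx
    · exact Or.inl (Zsqrtd.norm_eq_one_iff.mp hx)
    · exact Or.inr (Zsqrtd.norm_eq_one_iff.mp hx)

lemma prime_Cpii : Prime (C pii : GaussianInt[X]) :=
  Polynomial.prime_C_iff.mpr prime_pii

lemma p2_dvd_two : (C pii : GaussianInt[X]) ^ 2 ∣ 2 := by
  refine ⟨C ⟨0, -1⟩, ?_⟩
  rw [← map_pow, ← map_mul]
  have : (pii ^ 2 * ⟨0, -1⟩ : GaussianInt) = 2 := by decide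
  rw [this, map_ofNat]

lemma two_dvd_p2 : (2 : GaussianInt[X]) ∣ (C pii : GaussianInt[X]) ^ 2 := by
  refine ⟨C ⟨0, 1⟩, ?_⟩
  have : (pii ^ 2 : GaussianInt) = 2 * ⟨0, 1⟩ := by decide
  rw [← map_pow, this, map_mul, map_ofNat]

lemma p4_dvd_four : (C pii : GaussianInt[X]) ^ 4 ∣ 4 := by
  have h := mul_dvd_mul p2_dvd_two p2_dvd_two
  have h4 : (4 : GaussianInt[X]) = 2 * 2 := by norm_num
  rw [h4]
  calc (C pii : GaussianInt[X]) ^ 4 = C pii ^ 2 * C pii ^ 2 := by ring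
    _ ∣ 2 * 2 := h

/-- Key 2-divisibility lemma. -/
lemma two_dvd_key (a c s z x d : GaussianInt[X])
    (hs : a * c + 4 = s ^ 2) (hzc : c * d + 4 = z ^ 2) (hxa : a * d + 4 = x ^ 2) :
    2 ∣ a * z + s * x := by
  set p : GaussianInt[X] := C pii with hp_def
  have hp : Prime p := prime_Cpii
  set u : GaussianInt[X] := a * z + s * x with hu_def
  set w : GaussianInt[X] := a * z - s * x with hw_def
  have prod : u * w = 4 * (a ^ 2 - a * c - a * d - 4) := by
    rw [hu_def, hw_def]
    linear_combination (-(a ^ 2)) * hzc + x ^ 2 * hs + (a * c + 4) * hxa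
  have h4 : p ^ 4 ∣ u * w := by
    rw [prod]; exact (p4_dvd_four).mul_right _
  have h3 : p ^ 3 ∣ u * w := (pow_dvd_pow p (by norm_num)).trans h4
  have hu_eq : u = w + 2 * (s * x) := by rw [hu_def, hw_def]; ring
  have p2w_to_u : p ^ 2 ∣ w → 2 ∣ u := by
    intro h
    have h2sx : p ^ 2 ∣ 2 * (s * x) := p2_dvd_two.mul_right _
    have : p ^ 2 ∣ u := by rw [hu_eq]; exact dvd_add h h2sx
    exact two_dvd_p2.trans this
  by_cases hpu : p ∣ u
  · have hp2 : p ∣ 2 := (dvd_pow_self p two_ne_zero).trans p2_dvd_two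
    have hpw : p ∣ w := by
      have : p ∣ 2 * (s * x) := hp2.mul_right _
      have := dvd_sub hpu this
      rwa [hu_eq, add_sub_cancel_right] at this
    obtain ⟨u', hu'⟩ := hpu
    obtain ⟨w', hw'⟩ := hpw
    have huw2 : u * w = p ^ 2 * (u' * w') := by rw [hu', hw']; ring
    obtain ⟨k, hk⟩ := h3
    have hq : u' * w' = p * k := by
      have h0 : p ^ 2 * (u' * w') = p ^ 2 * (p * k) := by
        rw [← huw2, hk]; ring
      exact mul_left_cancel₀ (pow_ne_zero 2 hp.ne_zero) h0
    rcases hp.2.2 u' w' ⟨k, hq⟩ with h | h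
    · obtain ⟨u'', h''⟩ := h
      have : p ^ 2 ∣ u := ⟨u'', by rw [hu', h'']; ring⟩
      exact two_dvd_p2.trans this
    · obtain ⟨w'', h''⟩ := h
      exact p2w_to_u ⟨w'', by rw [hw', h'']; ring⟩
  · have : p ^ 3 ∣ w := hp.pow_dvd_of_dvd_mul_left 3 hpu h3
    exact p2w_to_u ((pow_dvd_pow p (by norm_num)).trans this)

/-- Main congruence induction for one sequence. -/
lemma main_aux (a c s z0 x0 d0 : GaussianInt[X]) (v : ℕ → GaussianInt[X])
    (hs : a * c + 4 = s ^ 2) (hd0c : c * d0 + 4 = z0 ^ 2) (hd0a : a * d0 + 4 = x0 ^ 2)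
    (hv0 : v 0 = z0) (hv1 : 2 * v 1 = s * z0 + c * x0)
    (hvrec : ∀ k, v (k + 2) = s * v (k + 1) - v k) :
    ∀ m : ℕ, c ∣ v (2 * m) - z0 ∧ c ∣ v (2 * m + 1) - v 1 := by
  obtain ⟨k, hk⟩ := two_dvd_key a c s z0 x0 d0 hs hd0c hd0a
  have h2ne : (2 : GaussianInt[X]) ≠ 0 := two_ne_zero
  have hsv1 : s * v 1 - 2 * z0 = c * k := by
    have h2 : (2 : GaussianInt[X]) * (s * v 1 - 2 * z0) = 2 * (c * k) := by
      calc 2 * (s * v 1 - 2 * z0) = s * (2 * v 1) - 4 * z0 := by ring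
        _ = s * (s * z0 + c * x0) - 4 * z0 := by rw [hv1]
        _ = c * (a * z0 + s * x0) := by linear_combination -z0 * hs
        _ = c * (2 * k) := by rw [hk]
        _ = 2 * (c * k) := by ring
    exact mul_left_cancel₀ h2ne h2
  intro m
  induction m with
  | zero =>
    constructor
    · simp [hv0]
    · simp
  | succ n ih =>
    obtain ⟨h1, h2⟩ := ih
    have heven : c ∣ v (2 * n + 2) - z0 := by
      have he : v (2 * n + 2) - z0 =
          s * (v (2 * n + 1) - v 1) - (v (2 * n) - z0) + (s * v 1 - 2 * z0) := by
        rw [hvrec (2 * n)]; ring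
      rw [he]
      exact dvd_add (dvd_sub (h2.mul_left s) h1) ⟨k, hsv1⟩
    have hodd : c ∣ v (2 * n + 3) - v 1 := by
      have ho : v (2 * n + 3) - v 1 =
          s * (v (2 * n + 2) - z0) - (v (2 * n + 1) - v 1) + (s * z0 - 2 * v 1) := by
        rw [hvrec (2 * n + 1)]; ring
      rw [ho]
      refine dvd_add (dvd_sub (heven.mul_left s) h2) ⟨-x0, ?_⟩
      linear_combination -hv1
    constructor
    · show c ∣ v (2 * n + 2) - z0
      exact heven
    · show c ∣ v (2 * n + 2 + 1) - v 1
      exact hodd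

end CongrAux

/-- Congruences modulo c for the recurrence sequences. -/
theorem congruences_mod_c_for_sequences
    (a b c r s t : GaussianInt[X])
    (ha : a ≠ 0) (hb : b ≠ 0) (hc : c ≠ 0)
    (hab : a ≠ b) (hac : a ≠ c) (hbc : b ≠ c)
    (hr : a * b + 4 = r ^ 2) (hs : a * c + 4 = s ^ 2) (ht : b * c + 4 = t ^ 2)
    (hαβ : a.natDegree ≤ b.natDegree) (hβγ : b.natDegree ≤ c.natDegree)
    (hβ : 0 < b.natDegree) (hγ : 0 < c.natDegree)
    (z0 x0 d0 : GaussianInt[X]) (v : ℕ → GaussianInt[X])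
    (hz0 : a * z0 ^ 2 - c * x0 ^ 2 = 4 * (a - c))
    (hz0deg : 4 * z0.natDegree + a.natDegree ≤ 3 * c.natDegree)
    (hx0deg : 4 * x0.natDegree ≤ a.natDegree + c.natDegree)
    (hd0c : c * d0 + 4 = z0 ^ 2) (hd0a : a * d0 + 4 = x0 ^ 2)
    (hv0 : v 0 = z0) (hv1 : 2 * v 1 = s * z0 + c * x0)
    (hvrec : ∀ k, v (k + 2) = s * v (k + 1) - v k)
    (z1 y1 d1 : GaussianInt[X]) (w : ℕ → GaussianInt[X])
    (hz1 : b * z1 ^ 2 - c * y1 ^ 2 = 4 * (b - c))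
    (hz1deg : 4 * z1.natDegree + b.natDegree ≤ 3 * c.natDegree)
    (hy1deg : 4 * y1.natDegree ≤ b.natDegree + c.natDegree)
    (hd1c : c * d1 + 4 = z1 ^ 2) (hd1b : b * d1 + 4 = y1 ^ 2)
    (hw0 : w 0 = z1) (hw1 : 2 * w 1 = t * z1 + c * y1)
    (hwrec : ∀ k, w (k + 2) = t * w (k + 1) - w k) :
    (∀ m : ℕ, c ∣ v (2 * m) - z0 ∧ c ∣ v (2 * m + 1) - v 1) ∧
    (∀ n : ℕ, c ∣ w (2 * n) - z1 ∧ c ∣ w (2 * n + 1) - w 1) :=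
  ⟨CongrAux.main_aux a c s z0 x0 d0 v hs hd0c hd0a hv0 hv1 hvrec,
   CongrAux.main_aux b c t z1 y1 d1 w ht hd1c hd1b hw0 hw1 hwrec⟩
end

section
/- For every m ≥ 0 (where the integers m, m^2, m*(m+1)/2 and 2m+1 are regarded as constant polynomials in ℤ[i][X]): c^2 divides 2*v_{2m} − 2*z0 − c*(a*z0*m^2 + s*x0*m) and c^2 divides 2*v_{2m+1} − s*z0 − c*(a*s*z0*(m*(m+1)/2) + x0*(2m+1)). For every n ≥ 0: c^2 divides 2*w_{2n} − 2*z1 − c*(b*z1*n^2 + t*y1*n) and c^2 divides 2*w_{2n+1} − t*z1 − c*(b*t*z1*(n*(n+1)/2) + y1*(2n+1)). -/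
open Polynomial

lemma seq_cong_helper {R : Type*} [CommRing R] (a c s z0 x0 : R) (v : ℕ → R)
    (hs : a * c + 4 = s ^ 2)
    (hv0 : v 0 = z0) (hv1 : 2 * v 1 = s * z0 + c * x0)
    (hrec : ∀ k, v (k + 2) = s * v (k + 1) - v k) :
    ∀ m : ℕ,
      c ^ 2 ∣ 2 * v (2 * m) - 2 * z0 - c * (a * z0 * ((m : R)) ^ 2 + s * x0 * (m : R)) ∧
      c ^ 2 ∣ 2 * v (2 * m + 1) - s * z0 -
        c * (a * s * z0 * ((m * (m + 1) / 2 : ℕ) : R) + x0 * ((2 * m + 1 : ℕ) : R)) := by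
  intro m
  induction m with
  | zero =>
    refine ⟨⟨0, ?_⟩, ⟨0, ?_⟩⟩
    · norm_num [hv0]
    · norm_num; linear_combination hv1
  | succ m ih =>
    obtain ⟨e, he⟩ := ih.1
    obtain ⟨f, hf⟩ := ih.2
    have hT2 : (2 : R) * ((m * (m + 1) / 2 : ℕ) : R) = (m : R) ^ 2 + (m : R) := by
      have h : 2 * (m * (m + 1) / 2) = m * (m + 1) :=
        Nat.two_mul_div_two_of_even (Nat.even_mul_succ_self m)
      have := congrArg (Nat.cast : ℕ → R) h
      push_cast at this
      linear_combination this
    have hT' : (m + 1) * (m + 1 + 1) / 2 = m * (m + 1) / 2 + (m + 1) := by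
      have h : (m + 1) * (m + 1 + 1) = m * (m + 1) + 2 * (m + 1) := by ring
      rw [h, Nat.add_mul_div_left _ _ (by norm_num : 0 < 2)]
    have hrec2 : v (2 * (m + 1)) = s * v (2 * m + 1) - v (2 * m) := by
      have h := hrec (2 * m)
      rwa [show 2 * m + 2 = 2 * (m + 1) from by ring] at h
    have hrec3 : v (2 * (m + 1) + 1) = s * v (2 * (m + 1)) - v (2 * m + 1) := by
      have h := hrec (2 * m + 1)
      rwa [show 2 * m + 1 + 2 = 2 * (m + 1) + 1 from by ring,
        show 2 * m + 1 + 1 = 2 * (m + 1) from by ring] at h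
    set T : R := ((m * (m + 1) / 2 : ℕ) : R) with hTdef
    have hfc : 2 * v (2 * m + 1) - s * z0 - c * (a * s * z0 * T + x0 * (2 * (m : R) + 1))
        = c ^ 2 * f := by
      rw [← hf]; push_cast; ring
    have hE1 : 2 * v (2 * (m + 1)) - 2 * z0 -
        c * (a * z0 * ((m : R) + 1) ^ 2 + s * x0 * ((m : R) + 1))
        = c ^ 2 * (s * f - e + a ^ 2 * z0 * T) := by
      rw [hrec2]
      linear_combination s * hfc - he - (z0 + c * a * z0 * T) * hs + 2 * a * c * z0 * hT2
    refine ⟨⟨s * f - e + a ^ 2 * z0 * T, ?_⟩,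
      ⟨s * (s * f - e + a ^ 2 * z0 * T) - f + a * x0 * ((m : R) + 1), ?_⟩⟩
    · push_cast
      linear_combination hE1
    · rw [hrec3, hT']
      push_cast
      linear_combination s * hE1 - hfc - c * x0 * ((m : R) + 1) * hs - a * c * s * z0 * hT2

/-- Congruences modulo c² for the recurrence sequences. -/
theorem congruences_mod_c_sq_for_sequences
    (a b c r s t : GaussianInt[X])
    (ha : a ≠ 0) (hb : b ≠ 0) (hc : c ≠ 0)
    (hab : a ≠ b) (hac : a ≠ c) (hbc : b ≠ c)
    (hr : a * b + 4 = r ^ 2) (hs : a * c + 4 = s ^ 2) (ht : b * c + 4 = t ^ 2)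
    (hαβ : a.natDegree ≤ b.natDegree) (hβγ : b.natDegree ≤ c.natDegree)
    (hβ : 0 < b.natDegree) (hγ : 0 < c.natDegree)
    (z0 x0 d0 : GaussianInt[X]) (v : ℕ → GaussianInt[X])
    (hz0 : a * z0 ^ 2 - c * x0 ^ 2 = 4 * (a - c))
    (hz0deg : 4 * z0.natDegree + a.natDegree ≤ 3 * c.natDegree)
    (hx0deg : 4 * x0.natDegree ≤ a.natDegree + c.natDegree)
    (hd0c : c * d0 + 4 = z0 ^ 2) (hd0a : a * d0 + 4 = x0 ^ 2)
    (hv0 : v 0 = z0) (hv1 : 2 * v 1 = s * z0 + c * x0)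
    (hvrec : ∀ k, v (k + 2) = s * v (k + 1) - v k)
    (z1 y1 d1 : GaussianInt[X]) (w : ℕ → GaussianInt[X])
    (hz1 : b * z1 ^ 2 - c * y1 ^ 2 = 4 * (b - c))
    (hz1deg : 4 * z1.natDegree + b.natDegree ≤ 3 * c.natDegree)
    (hy1deg : 4 * y1.natDegree ≤ b.natDegree + c.natDegree)
    (hd1c : c * d1 + 4 = z1 ^ 2) (hd1b : b * d1 + 4 = y1 ^ 2)
    (hw0 : w 0 = z1) (hw1 : 2 * w 1 = t * z1 + c * y1)
    (hwrec : ∀ k, w (k + 2) = t * w (k + 1) - w k) :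
    (∀ m : ℕ,
      c ^ 2 ∣ 2 * v (2 * m) - 2 * z0 -
        c * (a * z0 * ((m : GaussianInt[X])) ^ 2 + s * x0 * (m : GaussianInt[X])) ∧
      c ^ 2 ∣ 2 * v (2 * m + 1) - s * z0 -
        c * (a * s * z0 * ((m * (m + 1) / 2 : ℕ) : GaussianInt[X]) +
          x0 * ((2 * m + 1 : ℕ) : GaussianInt[X]))) ∧
    (∀ n : ℕ,
      c ^ 2 ∣ 2 * w (2 * n) - 2 * z1 -
        c * (b * z1 * ((n : GaussianInt[X])) ^ 2 + t * y1 * (n : GaussianInt[X])) ∧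
      c ^ 2 ∣ 2 * w (2 * n + 1) - t * z1 -
        c * (b * t * z1 * ((n * (n + 1) / 2 : ℕ) : GaussianInt[X]) +
          y1 * ((2 * n + 1 : ℕ) : GaussianInt[X]))) := by
  exact ⟨seq_cong_helper a c s z0 x0 v hs hv0 hv1 hvrec,
    seq_cong_helper b c t z1 y1 w ht hw0 hw1 hwrec⟩
end

section
/- Assume α = 0 (i.e. a is a nonzero constant). Let z0, x0 ∈ ℤ[i][X] satisfy a*z0^2 − c*x0^2 = 4*(a − c), with x0 constant (deg(x0) = 0 or x0 = 0) and z0 nonconstant (deg(z0) > 0). Then x0^2 = a^2 + 4 and z0^2 = a*c + 4 (i.e. z0 = ±s); moreover x0 = 0 and a^2 = −4 (i.e. a = 2i or a = −2i). -/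
open Polynomial

set_option maxHeartbeats 4000000 in
lemma int_aux_alpha_zero (p q u v : ℤ)
    (h1 : p*p - q*q = u*u - v*v + 4) (h2 : p*q = u*v)
    (hb1 : (p-u)^2 + (q-v)^2 ≤ 16) (hb2 : (p+u)^2 + (q+v)^2 ≤ 16)
    (huv : ¬(u = 0 ∧ v = 0)) :
    p = 0 ∧ q = 0 ∧ u = 0 ∧ v*v = 4 := by
  have hsum : p^2 + q^2 + u^2 + v^2 ≤ 16 := by nlinarith [sq_nonneg (p-u), sq_nonneg (p+u)]
  have hp := abs_le_of_sq_le_sq' (by nlinarith [sq_nonneg q, sq_nonneg u, sq_nonneg v] : p^2 ≤ 4^2) (by norm_num)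
  have hq := abs_le_of_sq_le_sq' (by nlinarith [sq_nonneg p, sq_nonneg u, sq_nonneg v] : q^2 ≤ 4^2) (by norm_num)
  have hu := abs_le_of_sq_le_sq' (by nlinarith [sq_nonneg q, sq_nonneg p, sq_nonneg v] : u^2 ≤ 4^2) (by norm_num)
  have hv := abs_le_of_sq_le_sq' (by nlinarith [sq_nonneg q, sq_nonneg u, sq_nonneg p] : v^2 ≤ 4^2) (by norm_num)
  obtain ⟨hp1,hp2⟩ := hp; obtain ⟨hq1,hq2⟩ := hq
  obtain ⟨hu1,hu2⟩ := hu; obtain ⟨hv1,hv2⟩ := hv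
  clear hb1 hb2 hsum
  interval_cases u <;> interval_cases v <;> interval_cases p <;> interval_cases q <;> omega

lemma gauss_aux_alpha_zero (x a : GaussianInt) (ha : a ≠ 0) (h : x^2 = a^2 + 4) :
    x = 0 ∧ a^2 = -4 := by
  have hfac : (x - a) * (x + a) = 4 := by ring_nf; linear_combination h
  have hnorm : (x - a).norm * (x + a).norm = 16 := by
    rw [← Zsqrtd.norm_mul, hfac]; decide
  have h16a : (x - a).norm ≤ 16 := Int.le_of_dvd (by norm_num) ⟨_, hnorm.symm⟩
  have hnorm' : (x + a).norm * (x - a).norm = 16 := by rw [mul_comm]; exact hnorm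
  have h16b : (x + a).norm ≤ 16 := Int.le_of_dvd (by norm_num) ⟨_, hnorm'.symm⟩
  rw [Zsqrtd.norm_def, Zsqrtd.re_sub, Zsqrtd.im_sub] at h16a
  rw [Zsqrtd.norm_def, Zsqrtd.re_add, Zsqrtd.im_add] at h16b
  have hb1 : (x.re - a.re)^2 + (x.im - a.im)^2 ≤ 16 := by nlinarith [h16a]
  have hb2 : (x.re + a.re)^2 + (x.im + a.im)^2 ≤ 16 := by nlinarith [h16b]
  have h1 : x.re*x.re - x.im*x.im = a.re*a.re - a.im*a.im + 4 := by
    have := congrArg Zsqrtd.re h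
    simp [pow_two, Zsqrtd.re_mul, Zsqrtd.re_add] at this
    linarith
  have h2 : x.re*x.im = a.re*a.im := by
    have := congrArg Zsqrtd.im h
    simp [pow_two, Zsqrtd.im_mul, Zsqrtd.im_add] at this
    linarith
  have huv : ¬(a.re = 0 ∧ a.im = 0) := by
    rintro ⟨h1, h2⟩; exact ha (by rw [Zsqrtd.ext_iff]; simp [h1, h2])
  obtain ⟨hp, hq, hu, hv⟩ := int_aux_alpha_zero _ _ _ _ h1 h2 hb1 hb2 huv
  constructor
  · rw [Zsqrtd.ext_iff]; simp [hp, hq]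
  · rw [Zsqrtd.ext_iff]
    constructor
    · simp [pow_two, Zsqrtd.re_mul, hu]; omega
    · simp [pow_two, Zsqrtd.im_mul, hu]

/-- If α = 0, x0 is constant and z0 is not, then x0² = a² + 4, z0² = ac + 4,
x0 = 0 and a = ±2i. -/
theorem alpha_zero_constant_solution
    (a b c r s t : GaussianInt[X])
    (ha : a ≠ 0) (hb : b ≠ 0) (hc : c ≠ 0)
    (hab : a ≠ b) (hac : a ≠ c) (hbc : b ≠ c)
    (hr : a * b + 4 = r ^ 2) (hs : a * c + 4 = s ^ 2) (ht : b * c + 4 = t ^ 2)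
    (hαβ : a.natDegree ≤ b.natDegree) (hβγ : b.natDegree ≤ c.natDegree)
    (hβ : 0 < b.natDegree) (hγ : 0 < c.natDegree)
    (hα : a.natDegree = 0)
    (z0 x0 : GaussianInt[X])
    (hz0 : a * z0 ^ 2 - c * x0 ^ 2 = 4 * (a - c))
    (hx0const : x0.natDegree = 0)
    (hz0nonconst : 0 < z0.natDegree) :
    x0 ^ 2 = a ^ 2 + 4 ∧ z0 ^ 2 = a * c + 4 ∧ x0 = 0 ∧ a ^ 2 = -4 := by
  have haC : a = C (a.coeff 0) := eq_C_of_natDegree_eq_zero hα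
  set a0 := a.coeff 0 with ha0def
  have hxC : x0 = C (x0.coeff 0) := eq_C_of_natDegree_eq_zero hx0const
  set ξ := x0.coeff 0 with hξdef
  have ha0 : a0 ≠ 0 := fun h => ha (by rw [haC, h, map_zero])
  have hz0ne : z0 ≠ 0 := fun h => by simp [h] at hz0nonconst
  have h4C : (4 : GaussianInt[X]) = C 4 := by rw [map_ofNat]
  -- degree of s
  have hsc : (s ^ 2).natDegree = c.natDegree := by
    rw [← hs, h4C, natDegree_add_C, haC, natDegree_C_mul ha0]
  have hsne : s ≠ 0 := by
    intro h; rw [h] at hsc; simp at hsc; omega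
  have hsdeg : 2 * s.natDegree = c.natDegree := by rw [← hsc, natDegree_pow]
  have hspos : 0 < s.natDegree := by omega
  -- key identity
  set k := ξ ^ 2 - 4 with hkdef
  set m := 4 * (a0 ^ 2 - ξ ^ 2 + 4) with hmdef
  have hkC : C k = x0 ^ 2 - 4 := by rw [hkdef, map_sub, map_pow, map_ofNat, ← hxC]
  have hmC : C m = 4 * (a ^ 2 - x0 ^ 2 + 4) := by
    rw [hmdef, map_mul, map_add, map_sub, map_pow, map_pow, map_ofNat, ← hxC, ← haC]
  set P := a * z0 with hPdef
  have hPpos : 0 < P.natDegree := by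
    rw [hPdef, haC, natDegree_C_mul ha0]; exact hz0nonconst
  have hPne : P ≠ 0 := fun h => by simp [h] at hPpos
  have hP1 : P ^ 2 = C k * s ^ 2 + C m := by
    rw [hkC, hmC, hPdef]
    linear_combination a * hz0 + (x0 ^ 2 - 4) * hs
  -- derivative
  have hD1 := congrArg derivative hP1
  simp only [derivative_add, derivative_mul, derivative_pow, derivative_C, zero_mul, mul_zero,
    add_zero, zero_add, pow_one, Nat.cast_ofNat, map_ofNat] at hD1
  have h2ne : (2 : GaussianInt[X]) ≠ 0 := two_ne_zero
  have hP2 : P * derivative P = C k * (s * derivative s) := by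
    apply mul_left_cancel₀ h2ne
    linear_combination hD1
  have hE3 : C m * derivative P = C k * s * (derivative s * P - s * derivative P) := by
    linear_combination (-(derivative P)) * hP1 + P * hP2
  -- k ≠ 0
  have hkne : k ≠ 0 := by
    intro h
    have h' := congrArg natDegree hP1
    rw [h, map_zero, zero_mul, zero_add, natDegree_pow, natDegree_C] at h'
    omega
  -- deg P = deg s
  have hdegPs : P.natDegree = s.natDegree := by
    have h' := congrArg natDegree hP1
    rw [natDegree_add_C, natDegree_pow, natDegree_C_mul hkne, natDegree_pow] at h'
    omega
  -- m = 0
  have hm0 : m = 0 := by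
    by_contra hm0
    by_cases hd : derivative P = 0
    · have := natDegree_eq_zero_of_derivative_eq_zero hd; omega
    · have hQne : derivative s * P - s * derivative P ≠ 0 := by
        intro h
        rw [h, mul_zero] at hE3
        exact hd (by
          have := mul_eq_zero.mp hE3
          rcases this with h' | h'
          · exact absurd h' (C_ne_zero.mpr hm0)
          · exact h')
      have hL : (C m * derivative P).natDegree < s.natDegree := by
        rw [natDegree_C_mul hm0]
        calc (derivative P).natDegree < P.natDegree := natDegree_derivative_lt hPpos.ne'
        _ = s.natDegree := hdegPs
      have hR : s.natDegree ≤ (C k * s * (derivative s * P - s * derivative P)).natDegree := by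
        rw [natDegree_mul (mul_ne_zero (C_ne_zero.mpr hkne) hsne) hQne,
            natDegree_C_mul hkne]
        omega
      rw [hE3] at hL
      omega
  -- conclusions
  have hmain : ξ ^ 2 = a0 ^ 2 + 4 := by
    have h4 : (4 : GaussianInt) ≠ 0 := by decide
    rw [hmdef] at hm0
    rcases mul_eq_zero.mp hm0 with h | h
    · exact absurd h h4
    · linear_combination -h
  obtain ⟨hξ0, ha2⟩ := gauss_aux_alpha_zero ξ a0 ha0 hmain
  have hCm0 : C m = 0 := by rw [hm0, map_zero]
  refine ⟨?_, ?_, ?_, ?_⟩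
  · rw [hxC, hξ0, map_zero, haC, ← map_pow, ha2, map_neg, map_ofNat]
    ring
  · have hkC' : C k = a ^ 2 := by
      rw [haC, ← map_pow]
      exact congrArg C (by linear_combination hmain)
    have hcancel : a ^ 2 * z0 ^ 2 = a ^ 2 * s ^ 2 := by
      linear_combination hP1 + hCm0 + s ^ 2 * hkC'
    have := mul_left_cancel₀ (pow_ne_zero 2 ha) hcancel
    rw [hs]; exact this
  · rw [hxC, hξ0, map_zero]
  · rw [haC, ← map_pow, ha2, map_neg, map_ofNat]
end

section
/- Let ε ∈ {1, −1} and let d, u, v, w ∈ ℤ[i][X] satisfy 2*d = 2*(a + b + c) + a*b*c + ε*r*s*t, 2*u = a*t + ε*r*s, 2*v = b*s + ε*r*t and 2*w = c*r + ε*s*t. Then: 2*c = 2*(a + b + d) + a*b*d − ε*r*u*v; d = a + b − c + r*w; d = a − b + c + s*v; and d = −a + b + c + t*u. -/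
open Polynomial

/-- Identities relating c and d± for a D(4)-triple in ℤ[i][X]. -/
theorem identities_for_regular_extensions
    (a b c r s t : GaussianInt[X])
    (ha : a ≠ 0) (hb : b ≠ 0) (hc : c ≠ 0)
    (hab : a ≠ b) (hac : a ≠ c) (hbc : b ≠ c)
    (hr : a * b + 4 = r ^ 2) (hs : a * c + 4 = s ^ 2) (ht : b * c + 4 = t ^ 2)
    (hαβ : a.natDegree ≤ b.natDegree) (hβγ : b.natDegree ≤ c.natDegree)
    (hβ : 0 < b.natDegree) (hγ : 0 < c.natDegree)
    (ε d u v w : GaussianInt[X]) (hε : ε = 1 ∨ ε = -1)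
    (hd : 2 * d = 2 * (a + b + c) + a * b * c + ε * (r * s * t))
    (hu : 2 * u = a * t + ε * (r * s))
    (hv : 2 * v = b * s + ε * (r * t))
    (hw : 2 * w = c * r + ε * (s * t)) :
    2 * c = 2 * (a + b + d) + a * b * d - ε * (r * u * v) ∧
    d = a + b - c + r * w ∧
    d = a - b + c + s * v ∧
    d = -a + b + c + t * u := by
  have hε2 : ε ^ 2 = 1 := by rcases hε with h | h <;> simp [h]
  have h2 : (2 : GaussianInt[X]) ≠ 0 := by norm_num
  have h8 : (8 : GaussianInt[X]) ≠ 0 := by norm_num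
  refine ⟨?_, ?_, ?_, ?_⟩
  · apply mul_left_cancel₀ h8
    linear_combination (-(8 : GaussianInt[X]) - 4*a*b) * hd + (4*ε*r*v) * hu
      + (2*ε*a*r*t + 2*ε^2*r^2*s) * hv
      + (-(2*a*t^2 + 2*b*s^2 + 2*ε*r*s*t)) * hr
      + (-(2*b*(a*b+4))) * hs + (-(2*a*(a*b+4))) * ht
      + (2*a*r^2*t^2 + 2*b*r^2*s^2 + 2*ε*r^3*s*t) * hε2
  · apply mul_left_cancel₀ h2
    linear_combination hd - r * hw + c * hr
  · apply mul_left_cancel₀ h2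
    linear_combination hd - s * hv + b * hs
  · apply mul_left_cancel₀ h2
    linear_combination hd - t * hu + a * ht
end

section
/- Either c = a + b + 2*r, or c = a + b − 2*r, or γ ≥ α + β. -/
open Polynomial

/-- Gap principle: either c = a + b ± 2r or γ ≥ α + β. -/
theorem gap_principle_for_triples
    (a b c r s t : GaussianInt[X])
    (ha : a ≠ 0) (hb : b ≠ 0) (hc : c ≠ 0)
    (hab : a ≠ b) (hac : a ≠ c) (hbc : b ≠ c)
    (hr : a * b + 4 = r ^ 2) (hs : a * c + 4 = s ^ 2) (ht : b * c + 4 = t ^ 2)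
    (hαβ : a.natDegree ≤ b.natDegree) (hβγ : b.natDegree ≤ c.natDegree)
    (hβ : 0 < b.natDegree) (hγ : 0 < c.natDegree) :
    c = a + b + 2 * r ∨ c = a + b - 2 * r ∨
      a.natDegree + b.natDegree ≤ c.natDegree := by
  by_cases h1 : c = a + b + 2 * r
  · exact Or.inl h1
  by_cases h2 : c = a + b - 2 * r
  · exact Or.inr (Or.inl h2)
  refine Or.inr (Or.inr ?_)
  have h2p : (2 : GaussianInt[X]) ≠ 0 := by norm_num
  have h4p : (4 : GaussianInt[X]) ≠ 0 := by norm_num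
  set u : GaussianInt[X] := a * b * c + 2 * (a + b + c) + r * s * t with hu_def
  set v : GaussianInt[X] := a * b * c + 2 * (a + b + c) - r * s * t with hv_def
  set P1 : GaussianInt[X] := c - a - b - 2 * r with hP1_def
  set P2 : GaussianInt[X] := c - a - b + 2 * r with hP2_def
  have key : u * v = 4 * (P1 * P2) := by
    rw [hu_def, hv_def, hP1_def, hP2_def]
    linear_combination (s ^ 2 * t ^ 2 - 16) * hr + (a * b + 4) * t ^ 2 * hs +
      (a * b + 4) * (a * c + 4) * ht
  have hP1ne : P1 ≠ 0 := by
    rw [hP1_def]; intro h; apply h1; linear_combination h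
  have hP2ne : P2 ≠ 0 := by
    rw [hP2_def]; intro h; apply h2; linear_combination h
  have huv : u * v ≠ 0 := by
    rw [key]; exact mul_ne_zero h4p (mul_ne_zero hP1ne hP2ne)
  have hu : u ≠ 0 := fun h => huv (by rw [h, zero_mul])
  have hv : v ≠ 0 := fun h => huv (by rw [h, mul_zero])
  -- degree of r is at most β
  have hrdeg : r.natDegree ≤ b.natDegree := by
    have e1 : (r ^ 2).natDegree = (a * b + 4).natDegree := by rw [hr]
    have e2 : (a * b + 4).natDegree ≤ a.natDegree + b.natDegree := by
      refine (natDegree_add_le _ _).trans ?_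
      simp [natDegree_mul ha hb]
    rw [natDegree_pow] at e1
    omega
  -- P1, P2 have degree at most γ
  have h2r : (2 * r).natDegree ≤ c.natDegree := by
    refine (natDegree_mul_le).trans ?_
    simp only [natDegree_ofNat, zero_add]
    omega
  have hP1deg : P1.natDegree ≤ c.natDegree := by
    rw [hP1_def]
    refine (natDegree_sub_le _ _).trans ?_
    have : (c - a - b).natDegree ≤ c.natDegree := by
      refine (natDegree_sub_le _ _).trans ?_
      have : (c - a).natDegree ≤ c.natDegree := by
        refine (natDegree_sub_le _ _).trans ?_
        omega
      omega
    omega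
  have hP2deg : P2.natDegree ≤ c.natDegree := by
    rw [hP2_def]
    refine (natDegree_add_le _ _).trans ?_
    have : (c - a - b).natDegree ≤ c.natDegree := by
      refine (natDegree_sub_le _ _).trans ?_
      have : (c - a).natDegree ≤ c.natDegree := by
        refine (natDegree_sub_le _ _).trans ?_
        omega
      omega
    omega
  -- product degree bound
  have hub : (u * v).natDegree ≤ 2 * c.natDegree := by
    rw [key]
    refine (natDegree_mul_le).trans ?_
    have h4 : (4 : GaussianInt[X]).natDegree = 0 := natDegree_ofNat 4
    have : (P1 * P2).natDegree ≤ 2 * c.natDegree := by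
      refine (natDegree_mul_le).trans ?_
      omega
    omega
  -- degree of u + v is α + β + γ
  have hsum : u + v = 2 * (a * b * c) + 4 * (a + b + c) := by
    rw [hu_def, hv_def]; ring
  have habc : (a * b * c).natDegree = a.natDegree + b.natDegree + c.natDegree := by
    rw [natDegree_mul (mul_ne_zero ha hb) hc, natDegree_mul ha hb]
  have h2abc : (2 * (a * b * c)).natDegree = a.natDegree + b.natDegree + c.natDegree := by
    rw [natDegree_mul h2p (mul_ne_zero (mul_ne_zero ha hb) hc)]
    simp [habc]
  have hlow : (4 * (a + b + c)).natDegree ≤ c.natDegree := by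
    refine (natDegree_mul_le).trans ?_
    have h4 : (4 : GaussianInt[X]).natDegree = 0 := natDegree_ofNat 4
    have : (a + b + c).natDegree ≤ c.natDegree := by
      refine (natDegree_add_le _ _).trans ?_
      have : (a + b).natDegree ≤ c.natDegree := by
        refine (natDegree_add_le _ _).trans ?_
        omega
      omega
    omega
  have hlt : (4 * (a + b + c)).natDegree < (2 * (a * b * c)).natDegree := by omega
  have hdegsum : (u + v).natDegree = a.natDegree + b.natDegree + c.natDegree := by
    rw [hsum, natDegree_add_eq_left_of_natDegree_lt hlt, h2abc]
  have hmax : a.natDegree + b.natDegree + c.natDegree ≤ max u.natDegree v.natDegree := by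
    rw [← hdegsum]; exact natDegree_add_le u v
  have hmaxle : max u.natDegree v.natDegree ≤ u.natDegree + v.natDegree :=
    max_le (Nat.le_add_right _ _) (Nat.le_add_left _ _)
  have hprod : u.natDegree + v.natDegree = (u * v).natDegree := (natDegree_mul hu hv).symm
  omega
end

section
/- If there exist nonnegative integers m, n with v_{2m} = w_{2n}, then z0 = z1. -/
open Polynomial

lemma even_cong_aux {R : Type*} [CommRing R] (a c s z0 x0 : R) (v : ℕ → R)
    (hs : a * c + 4 = s ^ 2) (hv0 : v 0 = z0) (hv1 : 2 * v 1 = s * z0 + c * x0)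
    (hvrec : ∀ k, v (k + 2) = s * v (k + 1) - v k) :
    ∀ m, c ∣ 2 ^ (2 * m) * v (2 * m) - 2 ^ (2 * m) * z0 := by
  have hdvd : c ∣ s ^ 2 - 4 := ⟨a, by linear_combination -hs⟩
  have key : ∀ m, (c ∣ 2 ^ (2 * m) * v (2 * m) - 2 ^ (2 * m) * z0) ∧
      (c ∣ 2 ^ (2 * m + 1) * v (2 * m + 1) - 2 ^ (2 * m) * (s * z0)) := by
    intro m
    induction m with
    | zero =>
      constructor
      · simp [hv0]
      · refine ⟨x0, ?_⟩
        have : 2 ^ (2 * 0 + 1) * v (2 * 0 + 1) = 2 * v 1 := by norm_num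
        rw [this, hv1]; ring
    | succ m ih =>
      obtain ⟨ih1, ih2⟩ := ih
      have hm : 2 * (m + 1) = 2 * m + 2 := by ring
      have even' : c ∣ 2 ^ (2 * m + 2) * v (2 * m + 2) - 2 ^ (2 * m + 2) * z0 := by
        have e1 : 2 ^ (2 * m + 2) * v (2 * m + 2) - 2 ^ (2 * m + 2) * z0
            = 2 * s * (2 ^ (2 * m + 1) * v (2 * m + 1) - 2 ^ (2 * m) * (s * z0))
              - 4 * (2 ^ (2 * m) * v (2 * m) - 2 ^ (2 * m) * z0)
              + 2 ^ (2 * m) * 2 * z0 * (s ^ 2 - 4) := by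
          rw [hvrec (2 * m)]; ring
        rw [e1]
        exact dvd_add (dvd_sub (ih2.mul_left _) (ih1.mul_left _)) (hdvd.mul_left _)
      have odd' : c ∣ 2 ^ (2 * m + 3) * v (2 * m + 3) - 2 ^ (2 * m + 2) * (s * z0) := by
        have e2 : 2 ^ (2 * m + 3) * v (2 * m + 3) - 2 ^ (2 * m + 2) * (s * z0)
            = 2 * s * (2 ^ (2 * m + 2) * v (2 * m + 2) - 2 ^ (2 * m + 2) * z0)
              - 4 * (2 ^ (2 * m + 1) * v (2 * m + 1) - 2 ^ (2 * m) * (s * z0)) := by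
          rw [hvrec (2 * m + 1)]; ring
        rw [e2]
        exact dvd_sub (even'.mul_left _) (ih2.mul_left _)
      constructor
      · rw [hm]; exact even'
      · have : 2 * (m + 1) + 1 = 2 * m + 3 := by ring
        rw [this, hm]; exact odd'
  exact fun m => (key m).1

/-- If v_{2m} = w_{2n} for some m, n then z0 = z1. -/
theorem even_even_intersection_initial_terms
    (a b c r s t : GaussianInt[X])
    (ha : a ≠ 0) (hb : b ≠ 0) (hc : c ≠ 0)
    (hab : a ≠ b) (hac : a ≠ c) (hbc : b ≠ c)
    (hr : a * b + 4 = r ^ 2) (hs : a * c + 4 = s ^ 2) (ht : b * c + 4 = t ^ 2)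
    (hαβ : a.natDegree ≤ b.natDegree) (hβγ : b.natDegree ≤ c.natDegree)
    (hβ : 0 < b.natDegree) (hγ : 0 < c.natDegree)
    (z0 x0 d0 : GaussianInt[X]) (v : ℕ → GaussianInt[X])
    (hz0 : a * z0 ^ 2 - c * x0 ^ 2 = 4 * (a - c))
    (hz0deg : 4 * z0.natDegree + a.natDegree ≤ 3 * c.natDegree)
    (hx0deg : 4 * x0.natDegree ≤ a.natDegree + c.natDegree)
    (hd0c : c * d0 + 4 = z0 ^ 2) (hd0a : a * d0 + 4 = x0 ^ 2)
    (hv0 : v 0 = z0) (hv1 : 2 * v 1 = s * z0 + c * x0)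
    (hvrec : ∀ k, v (k + 2) = s * v (k + 1) - v k)
    (z1 y1 d1 : GaussianInt[X]) (w : ℕ → GaussianInt[X])
    (hz1 : b * z1 ^ 2 - c * y1 ^ 2 = 4 * (b - c))
    (hz1deg : 4 * z1.natDegree + b.natDegree ≤ 3 * c.natDegree)
    (hy1deg : 4 * y1.natDegree ≤ b.natDegree + c.natDegree)
    (hd1c : c * d1 + 4 = z1 ^ 2) (hd1b : b * d1 + 4 = y1 ^ 2)
    (hw0 : w 0 = z1) (hw1 : 2 * w 1 = t * z1 + c * y1)
    (hwrec : ∀ k, w (k + 2) = t * w (k + 1) - w k)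
    (h : ∃ m n : ℕ, v (2 * m) = w (2 * n)) :
    z0 = z1 := by
  obtain ⟨m, n, hmn⟩ := h
  have hvd := even_cong_aux a c s z0 x0 v hs hv0 hv1 hvrec m
  have hwd := even_cong_aux b c t z1 y1 w ht hw0 hw1 hwrec n
  have hkey : c ∣ 2 ^ (2 * m + 2 * n) * (z0 - z1) := by
    have e : 2 ^ (2 * m + 2 * n) * (z0 - z1)
        = 2 ^ (2 * n) * -(2 ^ (2 * m) * v (2 * m) - 2 ^ (2 * m) * z0)
          + 2 ^ (2 * m) * (2 ^ (2 * n) * w (2 * n) - 2 ^ (2 * n) * z1) := by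
      rw [hmn]; ring
    rw [e]
    exact dvd_add ((hvd.neg_right).mul_left _) (hwd.mul_left _)
  by_contra hne
  have hz0lt : z0.natDegree < c.natDegree := by omega
  have hz1lt : z1.natDegree < c.natDegree := by omega
  have hsub : (z0 - z1).natDegree < c.natDegree :=
    lt_of_le_of_lt (Polynomial.natDegree_sub_le _ _) (max_lt hz0lt hz1lt)
  have h2 : (2 : GaussianInt[X]) ^ (2 * m + 2 * n) ≠ 0 := pow_ne_zero _ two_ne_zero
  have hne' : z0 - z1 ≠ 0 := sub_ne_zero.mpr hne
  have hp : 2 ^ (2 * m + 2 * n) * (z0 - z1) ≠ 0 := mul_ne_zero h2 hne'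
  have hle := Polynomial.natDegree_le_of_dvd hkey hp
  rw [Polynomial.natDegree_mul h2 hne'] at hle
  have hdeg2 : ((2 : GaussianInt[X]) ^ (2 * m + 2 * n)).natDegree = 0 := by
    simp [Polynomial.natDegree_pow]
  omega
end
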